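/- arXiv:0908.2863 — 2 statements merged into one kernel-verified Lean document; each statement's English description precedes it below -/
import Mathlib

section
/- For every irreducible representation ρ : Γ → SL(2,ℂ) of the figure-eight knot group Γ = ⟨x, y | x y⁻¹ x⁻¹ y x y⁻¹ x y x⁻¹ y⁻¹⟩, with meridian m = x and longitude l = y x⁻¹ y⁻¹ x² y⁻¹ x⁻¹ y, one has trace(ρ(l)) = trace(ρ(m))⁴ − 5·trace(ρ(m))² + 2. -/
open Matrix

/-- The relator of the figure-eight knot group: x y⁻¹ x⁻¹ y x y⁻¹ x y x⁻¹ y⁻¹. -/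
def figEightRels : Set (FreeGroup (Fin 2)) :=
  { FreeGroup.of 0 * (FreeGroup.of 1)⁻¹ * (FreeGroup.of 0)⁻¹ * FreeGroup.of 1 *
    FreeGroup.of 0 * (FreeGroup.of 1)⁻¹ * FreeGroup.of 0 * FreeGroup.of 1 *
    (FreeGroup.of 0)⁻¹ * (FreeGroup.of 1)⁻¹ }

/-- The figure-eight knot group. -/
def FigEightGroup := PresentedGroup figEightRels

instance : Group FigEightGroup := by unfold FigEightGroup; infer_instance

/-- The meridian m = x. -/
def fig8m : FigEightGroup := PresentedGroup.of 0

/-- The longitude l = y x⁻¹ y⁻¹ x² y⁻¹ x⁻¹ y. -/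
def fig8l : FigEightGroup :=
  PresentedGroup.of 1 * (PresentedGroup.of 0)⁻¹ * (PresentedGroup.of 1)⁻¹ *
  PresentedGroup.of 0 * PresentedGroup.of 0 * (PresentedGroup.of 1)⁻¹ *
  (PresentedGroup.of 0)⁻¹ * PresentedGroup.of 1

/-! ### Auxiliary material -/

local notation "SL2C" => Matrix.SpecialLinearGroup (Fin 2) ℂ
local notation "Mat2" => Matrix (Fin 2) (Fin 2) ℂ

set_option maxHeartbeats 4000000 in
/-- The core algebraic identity, for representatives in normal form. -/
lemma fig8core (s S p P r : ℂ) (hs : s * S = 1) (hp : p * P = 1)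
    (hK : !![s,1;0,S] * !![P,0;-r,p] * !![S,-1;0,s] * !![p,0;r,P] * !![s,1;0,S] * !![P,0;-r,p]
        = !![p,0;r,P] * !![s,1;0,S] * !![P,0;-r,p] * !![S,-1;0,s]) :
    Matrix.trace (!![p,0;r,P] * !![S,-1;0,s] * !![P,0;-r,p] * !![s,1;0,S] * !![s,1;0,S] *
      !![P,0;-r,p] * !![S,-1;0,s] * !![p,0;r,P]) = (s+S)^4 - 5*(s+S)^2 + 2 := by
  have hf := Matrix.ext_iff.mpr hK
  have h00 := hf 0 0
  have h01 := hf 0 1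
  have h10 := hf 1 0
  have h11 := hf 1 1
  simp [Matrix.mul_apply, Fin.sum_univ_two] at h00 h01 h10 h11
  rw [Matrix.trace_fin_two]
  simp [Matrix.mul_apply, Fin.sum_univ_two]
  linear_combination
    (-3 + r - p*P + p*P*r - 2*S*p + S*p*r - 2*S^2*p*P + 2*S^2*p*P*r - S^3*p + S^3*p*r - 2*s*p + s*p*r - 2*s^2*p*P + 2*s^2*p*P*r - s^3*p + s^3*p*r) * h00 +
    (P - P*r + P*r^2 - p*P^2 + p*P^2*r^2 + 2*S + 2*S*r + 2*S*P^2*r - 5*S*p*P - 3*S*p*P*r + S*p*P*r^2 + 4*S^2*P - 2*S^2*p*P^2 + 2*S^2*p*P^2*r^2 - S^3*r + 2*S^3*P^2*r - S^3*p*P + S^3*p*P*r^2 - S^4*P*r - S^5*r + 2*s + s*r + s*P^2 - 2*s*P^2*r - 2*s*p*P - s*p*P*r + s*p*P*r^2 + s*S*P + 2*s*S*P*r + s*S*p*P^2 - s*S*p*P^2*r - s*S^2 - 2*s*S^2*P^2*r + 4*s*S^2*p*P - s*S^2*p*P*r - 2*s*S^3*P + s*S^3*P*r + 2*s*S^3*p*P^2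 - 2*s*S^3*p*P^2*r - s*S^4 + s*S^4*r + s*S^4*p*P - s*S^4*p*P*r + 3*s^2*P - s^2*P*r - 2*s^2*p*P^2 + 2*s^2*p*P^2*r^2 - 2*s^2*S + s^2*S*r - s^2*S*P^2 + 2*s^2*S*P^2*r + 2*s^2*S*p*P - s^2*S*p*P*r - 2*s^2*S^2*P*r + s^3 - 2*s^3*P^2*r - s^3*p*P + s^3*p*P*r^2 - 2*s^3*S*P + 3*s^3*S*P*r + 2*s^3*S*p*P^2 - 2*s^3*S*p*P^2*r - s^3*S^2*r - s^4*P*r - s^4*S + s^4*S*r + s^4*S*p*P - s^4*S*p*P*r) * h01 +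
    (2 + r - 2*P^2 - 2*S*P + S*P*r - S*p + S^2 + S^2*r - 2*S^2*P^2 - S^3*P + 2*S^3*P*r + S^4*r - 2*s*P - 2*s*P*r - s*p*P^2 + s*p*P^2*r + s*S - 4*s*S*p*P + s*S*p*P*r + 2*s*S^2*P - 2*s*S^2*P*r - 2*s*S^2*p*P^2 + 2*s*S^2*p*P^2*r + s*S^3 - s*S^3*r - s*S^3*p*P + s*S^3*p*P*r + 2*s^2 - s^2*r - s^2*P^2 - 2*s^2*p*P + s^2*p*P*r + 2*s^2*S*P*r + s^3*P - 2*s^3*P*r - 2*s^3*p*P^2 + 2*s^3*p*P^2*r + s^3*S*r + s^4 - s^4*r - s^4*p*P + s^4*p*P*r) * h11 +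
    (2 + 8*r - r^2 + 2*P^2 + P^2*r - p*P - 8*p*P*r + p*P*r^2 - p*P^3 - p*P^3*r + p*P^3*r^2 - p^2*P^2 + p^2*P^2*r^2 - p^2*P^4 + p^2*P^4*r^2 + 2*p^3*P^3 - 2*p^3*P^3*r^2 + 3/2*S*P*r - 1/2*S*P*r^2 - 5/2*S*p + 9/2*S*p*r - S*p*r^2 + 3*S*p*P^2 + 7/2*S*p*P^2*r - 1/2*S*p*P^2*r^2 + 2*S*p*P^4*r - 15/2*S*p^2*P - 23/2*S*p^2*P*r + 3*S*p^2*P*r^2 - 3*S*p^2*P^3 - 7*S*p^2*P^3*r + S*p^2*P^3*r^2 + 10*S*p^3*P^2 + 6*S*p^3*P^2*r - 2*S*p^3*P^2*r^2 - 5/2*S^2 - 1/2*S^2*r^2 - S^2*P^2 + S^2*P^2*r - 1/2*S^2*p*P + 5*S^2*p*P*r - 5/2*S^2*p*P*r^2 + 3*S^2*p*P^3 - S^2*p*P^3*r - S^2*p^2 - S^2*p^2*r - 6*S^2*p^2*P^2 - 5*S^2*p^2*P^2*r + 6*S^2*p^2*P^2*r^2 - 2*S^2*p^2*P^4 + 2*S^2*p^2*P^4*r^2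 + S^2*p^3*P + 4*S^2*p^3*P^3 - 4*S^2*p^3*P^3*r^2 - 1/2*S^3*P + 3/2*S^3*P*r - S^3*P*r^2 - S^3*p + 2*S^3*p*r - S^3*p*r^2 - 1/2*S^3*p*P^2 + 3/2*S^3*p*P^2*r - S^3*p*P^2*r^2 + 2*S^3*p*P^4*r - S^3*p^2*P - 3*S^3*p^2*P*r + 3*S^3*p^2*P*r^2 + S^3*p^2*P^3 - 4*S^3*p^2*P^3*r + S^3*p^2*P^3*r^2 + 2*S^3*p^3*P^2 - 2*S^3*p^3*P^2*r^2 + 1/2*S^4*r - 1/2*S^4*r^2 + 3/2*S^4*p*P*r - 1/2*S^4*p*P*r^2 - S^4*p*P^3*r - S^4*p^2*r + S^4*p^2*P^2 - S^5*p*P^2*r + S^5*p^2*P*r + s*P - s*P*r + s*P*r^2 - s*P^3 - s*p + 3*s*p*r - s*p*r^2 + 7/2*s*p*P^2 - s*p*P^2*r + 1/2*s*p*P^2*r^2 + s*p*P^4 - 2*s*p*P^4*r - 4*s*p^2*P - 5*s*p^2*P*r + 3*s*p^2*P*r^2 - 9/2*s*p^2*P^3 + 4*s*p^2*P^3*r +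 1/2*s*p^2*P^3*r^2 + 5*s*p^3*P^2 + s*p^3*P^2*r - 2*s*p^3*P^2*r^2 - 11/2*s*S - 1/2*s*S*r - 1/2*s*S*p*P + 2*s*S*p*P*r - 1/2*s*S*p*P*r^2 + s*S*p*P^3 + 2*s*S*p*P^3*r - s*S*p^2 - 2*s*S*p^2*P^2 + 1/2*s*S*p^2*P^2*r - 1/2*s*S*p^2*P^2*r^2 + s*S*p^2*P^4 - s*S*p^2*P^4*r + 4*s*S*p^3*P - s*S*p^3*P*r - s*S*p^3*P^3 + s*S*p^3*P^3*r + s*S^2*P - 2*s*S^2*P*r + s*S^2*P*r^2 + s*S^2*p*P^2 - 2*s*S^2*p*P^2*r - 2*s*S^2*p*P^4*r - s*S^2*p^2*P + 2*s*S^2*p^2*P*r + 3*s*S^2*p^2*P^3 + 5*s*S^2*p^2*P^3*r - s*S^2*p^2*P^3*r^2 - 2*s*S^2*p^3*P^2 - s*S^2*p^3*P^2*r + 1/2*s*S^3 - s*S^3*r + 1/2*s*S^3*r^2 + s*S^3*p*P - s*S^3*p*P*r - 2*s*S^3*p*P^3 + s*S^3*p*P^3*r - s*S^3*p^2 + s*S^3*p^2*r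 + 3/2*s*S^3*p^2*P^2 + s*S^3*p^2*P^2*r - 1/2*s*S^3*p^2*P^2*r^2 + 2*s*S^3*p^2*P^4 - 2*s*S^3*p^2*P^4*r + s*S^3*p^3*P - s*S^3*p^3*P*r - 2*s*S^3*p^3*P^3 + 2*s*S^3*p^3*P^3*r - s*S^4*p*P^2 + s*S^4*p*P^2*r + s*S^4*p^2*P - s*S^4*p^2*P*r + s*S^4*p^2*P^3 - s*S^4*p^2*P^3*r - s*S^4*p^3*P^2 + s*S^4*p^3*P^2*r - 2*s^2 - 3/2*s^2*r + 1/2*s^2*r^2 - 1/2*s^2*P^2 + 1/2*s^2*P^2*r + 3*s^2*p*P*r - 2*s^2*p*P*r^2 + 7/2*s^2*p*P^3 - 5/2*s^2*p*P^3*r - 2*s^2*p^2 + s^2*p^2*r - 8*s^2*p^2*P^2 - 1/2*s^2*p^2*P^2*r + 11/2*s^2*p^2*P^2*r^2 - 2*s^2*p^2*P^4 + 2*s^2*p^2*P^4*r^2 + 2*s^2*p^3*P - s^2*p^3*P*r + 4*s^2*p^3*P^3 - 4*s^2*p^3*P^3*r^2 + s^2*S*P*r - s^2*S*P*r^2 -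 2*s^2*S*p*P^2 + 4*s^2*S*p*P^2*r - s^2*S*p*P^2*r^2 - s^2*S*p*P^4 + 2*s^2*S*p*P^4*r + 2*s^2*S*p^2*P - 3*s^2*S*p^2*P*r + 5*s^2*S*p^2*P^3 - 5*s^2*S*p^2*P^3*r - 2*s^2*S*p^3*P^2 + s^2*S*p^3*P^2*r - 2*s^2*S^2*p*P^3*r + 2*s^2*S^2*p^2*P^2*r + 1/2*s^3*P - 3/2*s^3*P*r + s^3*P*r^2 - s^3*p + 2*s^3*p*r - s^3*p*r^2 + 5/2*s^3*p*P^2 - 5/2*s^3*p*P^2*r - 2*s^3*p*P^4*r - 4*s^3*p^2*P + 3*s^3*p^2*P*r^2 - 2*s^3*p^2*P^3 + 6*s^3*p^2*P^3*r + 4*s^3*p^3*P^2 - 2*s^3*p^3*P^2*r - 2*s^3*p^3*P^2*r^2 + 1/2*s^3*S*r - 1/2*s^3*S*r^2 + 3/2*s^3*S*p*P*r - 1/2*s^3*S*p*P*r^2 - 2*s^3*S*p*P^3 + 3*s^3*S*p*P^3*r - s^3*S*p^2*r + 3*s^3*S*p^2*P^2 - 4*s^3*S*p^2*P^2*r + 2*s^3*S*p^2*P^4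 - 2*s^3*S*p^2*P^4*r - 2*s^3*S*p^3*P^3 + 2*s^3*S*p^3*P^3*r - s^3*S^2*p*P^2*r + s^3*S^2*p^2*P*r + 1/2*s^4 - s^4*r + 1/2*s^4*r^2 + s^4*p*P - s^4*p*P*r - s^4*p*P^3*r - s^4*p^2 + s^4*p^2*r - 1/2*s^4*p^2*P^2 + 3*s^4*p^2*P^2*r - 1/2*s^4*p^2*P^2*r^2 + s^4*p^3*P - s^4*p^3*P*r - s^4*S*p*P^2 + s^4*S*p*P^2*r + s^4*S*p^2*P - s^4*S*p^2*P*r + s^4*S*p^2*P^3 - s^4*S*p^2*P^3*r - s^4*S*p^3*P^2 + s^4*S*p^3*P^2*r) * hs +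
    (-8*r - r^2 + 2*r^3 - r^4 - 2*P^2 - P^2*r + 2*P^2*r^2 + p*P - p*P*r + p*P*r^3 - p*P*r^4 - p*P^3 + p*P^3*r^2 + 2*p^2*P^2 - 2*p^2*P^2*r^2 - 7/2*S*P*r + 9/2*S*P*r^2 - 3*S*P*r^3 + 2*S*P^3*r + 5/2*S*p - 19/2*S*p*r + 2*S*p*r^2 + 5*S*p*r^3 - S*p*r^4 - 3*S*p*P^2 - 6*S*p*P^2*r + S*p*P^2*r^2 - S*p*P^2*r^3 + 10*S*p^2*P + 5*S*p^2*P*r - 2*S*p^2*P*r^2 + S*p^2*P*r^3 - 5/2*S^2 - 1/2*S^2*r^2 - S^2*r^3 + S^2*P^2 + S^2*P^2*r - 2*S^2*p*P - 4*S^2*p*P*r + 9*S^2*p*P*r^2 + S^2*p*P*r^3 - 2*S^2*p*P*r^4 - 2*S^2*p*P^3 + 2*S^2*p*P^3*r^2 + S^2*p^2 - 5*S^2*p^2*r - 3*S^2*p^2*r^2 + S^2*p^2*r^3 + 4*S^2*p^2*P^2 - 4*S^2*p^2*P^2*r^2 + 1/2*S^3*P - 5/2*S^3*P*r + S^3*P*r^2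 - 2*S^3*P*r^3 + 2*S^3*P^3*r + S^3*p - 2*S^3*p*r + 3*S^3*p*r^2 + S^3*p*r^3 - S^3*p*r^4 + S^3*p*P^2 - 2*S^3*p*P^2*r + S^3*p*P^2*r^2 - 2*S^3*p*P^2*r^3 + 2*S^3*p^2*P - 2*S^3*p^2*P*r - 2*S^3*p^2*P*r^2 + 2*S^3*p^2*P*r^3 + S^4 - 1/2*S^4*r + 1/2*S^4*r^2 - S^4*r^3 + S^4*P^2*r - 2*S^4*P^2*r^2 + S^4*p*P - S^4*p*P*r + 2*S^4*p*P*r^2 - S^4*p*P*r^3 - S^4*p^2*r + S^4*p^2*r^3 - S^5*P*r^2 + S^5*p*r^2 - s*P + 3*s*P*r - 4*s*P*r^2 + 3*s*P*r^3 + s*P^3 - 2*s*P^3*r + s*p - 7*s*p*r + 4*s*p*r^2 + s*p*r^3 - s*p*r^4 - 7/2*s*p*P^2 + 3*s*p*P^2*r - 1/2*s*p*P^2*r^2 + s*p*P^2*r^3 + 4*s*p^2*P + 2*s*p^2*P*r - s*p^2*P*r^2 - s*p^2*P*r^3 - 5/2*s*S + 17/2*s*S*r - 2*s*S*r^2 +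 2*s*S*P^2 - 2*s*S*P^2*r + 4*s*S*P^2*r^2 + 15/2*s*S*p*P*r - 17/2*s*S*p*P*r^2 + s*S*p*P^3 - s*S*p*P^3*r - s*S*p^2 - s*S*p^2*r + 3*s*S*p^2*r^2 - s*S*p^2*P^2 + s*S*p^2*P^2*r - s*S^2*P + 7/2*s*S^2*P*r - 5/2*s*S^2*P*r^2 + 2*s*S^2*P*r^3 - 2*s*S^2*P^3*r - 5/2*s*S^2*p + 9/2*s*S^2*p*r - 2*s*S^2*p*r^2 + 5*s*S^2*p*P^2 + 3*s*S^2*p*P^2*r - 3*s*S^2*p*P^2*r^2 + 2*s*S^2*p*P^2*r^3 - 4*s*S^2*p^2*P + s*S^2*p^2*P*r + 2*s*S^2*p^2*P*r^2 - 2*s*S^2*p^2*P*r^3 + s*S^3 + s*S^3*r - 2*s*S^3*r^2 + s*S^3*r^3 - s*S^3*P^2 - 2*s*S^3*P^2*r + 4*s*S^3*P^2*r^2 - 3/2*s*S^3*p*P + 8*s*S^3*p*P*r - 15/2*s*S^3*p*P*r^2 + s*S^3*p*P*r^3 + 2*s*S^3*p*P^3 - 2*s*S^3*p*P^3*r + s*S^3*p^2*r^2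 - s*S^3*p^2*r^3 - 2*s*S^3*p^2*P^2 + 2*s*S^3*p^2*P^2*r - 1/2*s*S^4*P + 1/2*s*S^4*P*r + s*S^4*P*r^2 - s*S^4*p + 3*s*S^4*p*r - 3*s*S^4*p*r^2 + s*S^4*p*P^2 - s*S^4*p*P^2*r - s*S^4*p^2*P + s*S^4*p^2*P*r + 1/2*s*S^5*r - 1/2*s*S^5*r^2 - 3*s^2 + 3/2*s^2*r - 5/2*s^2*r^2 + s^2*r^3 + 1/2*s^2*P^2 + 1/2*s^2*P^2*r - s^2*p*P - 13/2*s^2*p*P*r + 7/2*s^2*p*P*r^2 + 3*s^2*p*P*r^3 - 2*s^2*p*P*r^4 - 2*s^2*p*P^3 + 2*s^2*p*P^3*r^2 + 2*s^2*p^2*r^2 - s^2*p^2*r^3 + 4*s^2*p^2*P^2 - 4*s^2*p^2*P^2*r^2 + s^2*S*P - 3*s^2*S*P*r + 3*s^2*S*P*r^2 - 2*s^2*S*P*r^3 - s^2*S*P^3 + 2*s^2*S*P^3*r - s^2*S*p + 4*s^2*S*p*r - 2*s^2*S*p*r^2 + 9/2*s^2*S*p*P^2 - 2*s^2*S*p*P^2*r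 - 1/2*s^2*S*p*P^2*r^2 - 2*s^2*S*p*P^2*r^3 - 2*s^2*S*p^2*P - s^2*S*p^2*P*r + 2*s^2*S*p^2*P*r^3 + 1/2*s^2*S^2 - 1/2*s^2*S^2*r + 2*s^2*S^2*P^2*r - 4*s^2*S^2*P^2*r^2 - 2*s^2*S^2*p*P + 1/2*s^2*S^2*p*P*r + 7/2*s^2*S^2*p*P*r^2 + s^2*S^3*P - s^2*S^3*P*r - s^2*S^3*p*r + s^2*S^3*p*r^2 - s^2*S^3*p*P^2 + 2*s^2*S^3*p*P^2*r - s^2*S^3*p*P^2*r^2 + 1/2*s^2*S^4 - s^2*S^4*r + 1/2*s^2*S^4*r^2 - 1/2*s^2*S^4*p*P + s^2*S^4*p*P*r - 1/2*s^2*S^4*p*P*r^2 - 1/2*s^3*P + 7/2*s^3*P*r - 3*s^3*P*r^2 + 2*s^3*P*r^3 - 2*s^3*P^3*r + s^3*p - 5*s^3*p*r + 3*s^3*p*r^2 + s^3*p*r^3 - s^3*p*r^4 + 4*s^3*p*P^2*r - 2*s^3*p*P^2*r^2 + 2*s^3*p*P^2*r^3 + 2*s^3*p^2*P - 2*s^3*p^2*P*r^3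 + 2*s^3*S - 2*s^3*S*r + s^3*S*r^2 - s^3*S*r^3 - 1/2*s^3*S*P^2 - 1/2*s^3*S*P^2*r + 4*s^3*S*P^2*r^2 - 2*s^3*S*p*P + 13/2*s^3*S*p*P*r - 13/2*s^3*S*p*P*r^2 - s^3*S*p*P*r^3 + 2*s^3*S*p*P^3 - 2*s^3*S*p*P^3*r - s^3*S*p^2*r + s^3*S*p^2*r^3 - 2*s^3*S*p^2*P^2 + 2*s^3*S*p^2*P^2*r + s^3*S^2*P*r - 2*s^3*S^2*P*r^2 + s^3*S^2*p*r^2 + 1/2*s^4 + s^4*r - 3/2*s^4*r^2 + s^4*r^3 + s^4*P^2*r - 2*s^4*P^2*r^2 + 1/2*s^4*p*P + 1/2*s^4*p*P*r^2 + s^4*p*P*r^3 + s^4*p^2*r^2 - s^4*p^2*r^3 + 1/2*s^4*S*P - 5/2*s^4*S*P*r + 3*s^4*S*P*r^2 - s^4*S*p + 3*s^4*S*p*r - 3*s^4*S*p*r^2 + s^4*S*p*P^2*r - s^4*S*p*P^2*r^2 - s^4*S*p^2*P + s^4*S*p^2*P*r + 1/2*s^4*S^2*r - 1/2*s^4*S^2*r^2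 + s^5*P*r - s^5*P*r^2 - s^5*p*r + s^5*p*r^2 + 1/2*s^5*S - s^5*S*r + 1/2*s^5*S*r^2 - 1/2*s^5*S*p*P + s^5*S*p*P*r - 1/2*s^5*S*p*P*r^2) * hp

/-- Every `2 × 2` complex matrix has an eigenvector. -/
lemma exists_eigenvec (A : Mat2) :
    ∃ (μ : ℂ) (v : Fin 2 → ℂ), v ≠ 0 ∧ A.mulVec v = μ • v := by
  obtain ⟨μ, hμ⟩ := Module.End.exists_eigenvalue (Matrix.toLin' A)
  obtain ⟨v, hv⟩ := hμ.exists_hasEigenvector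
  refine ⟨μ, v, hv.2, ?_⟩
  have := hv.apply_eq_smul
  simpa [Matrix.toLin'_apply] using this

lemma collinear_of_det {v w : Fin 2 → ℂ} (hv : v ≠ 0)
    (h : v 0 * w 1 - v 1 * w 0 = 0) : ∃ k : ℂ, w = k • v := by
  rcases eq_or_ne (v 0) 0 with h0 | h0
  · have h1 : v 1 ≠ 0 := by
      intro h1
      apply hv
      funext i; fin_cases i
      · exact h0
      · exact h1
    refine ⟨w 1 / v 1, ?_⟩
    funext i
    fin_cases i <;> simp only [Fin.zero_eta, Fin.mk_one, Fin.isValue, Pi.smul_apply, smul_eq_mul]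
    · have hvw : v 1 * w 0 = 0 := by linear_combination -h + w 1 * h0
      have hw0 : w 0 = 0 := (mul_eq_zero.mp hvw).resolve_left h1
      rw [hw0, h0, mul_zero]
    · rw [div_mul_cancel₀ _ h1]
  · refine ⟨w 0 / v 0, ?_⟩
    funext i
    fin_cases i <;> simp only [Fin.zero_eta, Fin.mk_one, Fin.isValue, Pi.smul_apply, smul_eq_mul]
    · rw [div_mul_cancel₀ _ h0]
    · rw [div_mul_eq_mul_div, eq_div_iff h0]
      linear_combination h

/-- Pairs with no common eigenvector. -/
def NoCommonEV (A B : SL2C) : Prop :=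
  ¬ ∃ v : Fin 2 → ℂ, v ≠ 0 ∧ (∃ a : ℂ, (A : Mat2).mulVec v = a • v) ∧
      (∃ b : ℂ, (B : Mat2).mulVec v = b • v)

lemma sl2_mulVec_inv (g : SL2C) (v : Fin 2 → ℂ) :
    ((g⁻¹ : SL2C) : Mat2).mulVec (((g : SL2C) : Mat2).mulVec v) = v := by
  rw [Matrix.mulVec_mulVec, ← Matrix.SpecialLinearGroup.coe_mul, inv_mul_cancel,
    Matrix.SpecialLinearGroup.coe_one, Matrix.one_mulVec]

lemma sl2_mulVec_ne_zero (g : SL2C) {v : Fin 2 → ℂ} (hv : v ≠ 0) :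
    ((g : SL2C) : Mat2).mulVec v ≠ 0 := by
  intro h
  apply hv
  have := sl2_mulVec_inv g v
  rw [h, Matrix.mulVec_zero] at this
  exact this.symm

lemma conj_eigen {A g : SL2C} {v : Fin 2 → ℂ} {a : ℂ}
    (h : ((g⁻¹ * A * g : SL2C) : Mat2).mulVec v = a • v) :
    (A : Mat2).mulVec (((g : SL2C) : Mat2).mulVec v)
      = a • (((g : SL2C) : Mat2).mulVec v) := by
  have key : ((A : SL2C) : Mat2) * (g : Mat2) = (g : Mat2) * ((g⁻¹ * A * g : SL2C) : Mat2) := by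
    rw [← Matrix.SpecialLinearGroup.coe_mul, ← Matrix.SpecialLinearGroup.coe_mul]
    congr 1
    group
    rfl
  calc (A : Mat2).mulVec (((g : SL2C) : Mat2).mulVec v)
      = (((A : SL2C) : Mat2) * (g : Mat2)).mulVec v := Matrix.mulVec_mulVec v _ _
    _ = ((g : Mat2) * ((g⁻¹ * A * g : SL2C) : Mat2)).mulVec v := by rw [key]
    _ = (g : Mat2).mulVec (((g⁻¹ * A * g : SL2C) : Mat2).mulVec v) :=
        (Matrix.mulVec_mulVec v _ _).symm
    _ = (g : Mat2).mulVec (a • v) := by rw [h]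
    _ = a • (g : Mat2).mulVec v := Matrix.mulVec_smul _ _ _

lemma noCommonEV_conj {A B : SL2C} (g : SL2C) (h : NoCommonEV A B) :
    NoCommonEV (g⁻¹ * A * g) (g⁻¹ * B * g) := by
  rintro ⟨v, hv, ⟨a, ha⟩, ⟨b, hb⟩⟩
  exact h ⟨(g : Mat2).mulVec v, sl2_mulVec_ne_zero g hv,
    ⟨a, conj_eigen ha⟩, ⟨b, conj_eigen hb⟩⟩

lemma trace_conj (g X : SL2C) :
    Matrix.trace ((g⁻¹ * X * g : SL2C) : Mat2) = Matrix.trace (X : Mat2) := by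
  rw [Matrix.SpecialLinearGroup.coe_mul, Matrix.SpecialLinearGroup.coe_mul,
    Matrix.trace_mul_cycle, ← Matrix.SpecialLinearGroup.coe_mul,
    mul_inv_cancel, Matrix.SpecialLinearGroup.coe_one, one_mul]

set_option maxHeartbeats 1000000 in
/-- The key lemma for an irreducible pair of `SL₂` matrices satisfying the fig-8 relation. -/
lemma fig8pair (A B : SL2C)
    (hK : A * B⁻¹ * A⁻¹ * B * A * B⁻¹ = B * A * B⁻¹ * A⁻¹)
    (h : NoCommonEV A B) :
    Matrix.trace ((B * A⁻¹ * B⁻¹ * A * A * B⁻¹ * A⁻¹ * B : SL2C) : Mat2)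
      = (Matrix.trace (A : Mat2))^4 - 5*(Matrix.trace (A : Mat2))^2 + 2 := by
  obtain ⟨μ, v, hv0, hv⟩ := exists_eigenvec (A : Mat2)
  obtain ⟨ν, w, hw0, hw⟩ := exists_eigenvec (B : Mat2)
  have hv0' := congrFun hv 0
  have hv1' := congrFun hv 1
  have hw0' := congrFun hw 0
  have hw1' := congrFun hw 1
  simp only [Matrix.mulVec, dotProduct, Fin.sum_univ_two, Pi.smul_apply,
    smul_eq_mul] at hv0' hv1' hw0' hw1'
  -- the eigenvectors are linearly independent
  have hd : v 0 * w 1 - v 1 * w 0 ≠ 0 := by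
    intro hd
    obtain ⟨k, hk⟩ := collinear_of_det hv0 hd
    have hk0 : k ≠ 0 := by
      rintro rfl
      rw [zero_smul] at hk
      exact hw0 hk
    apply h
    refine ⟨v, hv0, ⟨μ, hv⟩, ⟨ν, ?_⟩⟩
    have hv' : v = k⁻¹ • w := by
      rw [hk, smul_smul, inv_mul_cancel₀ hk0, one_smul]
    rw [hv', Matrix.mulVec_smul, hw, smul_smul, smul_smul, mul_comm]
  obtain ⟨e, he⟩ := IsAlgClosed.exists_pow_nat_eq (v 0 * w 1 - v 1 * w 0) (n := 2) (by norm_num)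
  have he0 : e ≠ 0 := by
    intro h'
    rw [h'] at he
    apply hd
    rw [← he]
    ring
  set M1 : Mat2 := !![e⁻¹ * v 0, e⁻¹ * w 0; e⁻¹ * v 1, e⁻¹ * w 1] with hM1
  have hdet1 : M1.det = 1 := by
    rw [hM1, Matrix.det_fin_two_of]
    field_simp
    linear_combination -he
  set g1 : SL2C := ⟨M1, hdet1⟩ with hg1
  set A1 : SL2C := g1⁻¹ * A * g1 with hA1
  set B1 : SL2C := g1⁻¹ * B * g1 with hB1
  have hg1coe : (g1 : Mat2) = M1 := rfl
  have hA1val : (A1 : Mat2) = M1.adjugate * (A : Mat2) * M1 := by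
    rw [hA1, Matrix.SpecialLinearGroup.coe_mul, Matrix.SpecialLinearGroup.coe_mul,
      Matrix.SpecialLinearGroup.coe_inv, hg1coe]
  have hB1val : (B1 : Mat2) = M1.adjugate * (B : Mat2) * M1 := by
    rw [hB1, Matrix.SpecialLinearGroup.coe_mul, Matrix.SpecialLinearGroup.coe_mul,
      Matrix.SpecialLinearGroup.coe_inv, hg1coe]
  have hA1_10 : (A1 : Mat2) 1 0 = 0 := by
    rw [hA1val, Matrix.adjugate_fin_two, hM1]
    simp [Matrix.mul_apply, Matrix.vecMul, dotProduct, Fin.sum_univ_two, -mul_eq_zero]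
    linear_combination (e⁻¹ * e⁻¹ * v 0) * hv1' - (e⁻¹ * e⁻¹ * v 1) * hv0'
  have hB1_01 : (B1 : Mat2) 0 1 = 0 := by
    rw [hB1val, Matrix.adjugate_fin_two, hM1]
    simp [Matrix.mul_apply, Matrix.vecMul, dotProduct, Fin.sum_univ_two, -mul_eq_zero]
    linear_combination (e⁻¹ * e⁻¹ * w 1) * hw0' - (e⁻¹ * e⁻¹ * w 0) * hw1'
  -- the off-diagonal entry of A1 is nonzero
  have hb : (A1 : Mat2) 0 1 ≠ 0 := by
    intro hb0
    have hAg : (A : Mat2) * M1 = M1 * (A1 : Mat2) := by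
      have hgA : A * g1 = g1 * A1 := by rw [hA1]; group
      have hc := congrArg (fun m : SL2C => (m : Mat2)) hgA
      simp only [Matrix.SpecialLinearGroup.coe_mul, hg1coe] at hc
      exact hc
    apply h
    refine ⟨w, hw0, ⟨(A1 : Mat2) 1 1, ?_⟩, ⟨ν, hw⟩⟩
    have h2 := congrArg (fun m : Mat2 => m.mulVec ![0,1]) hAg
    rw [← Matrix.mulVec_mulVec, ← Matrix.mulVec_mulVec] at h2
    have hcol : M1.mulVec ![0,1] = e⁻¹ • w := by
      funext i
      fin_cases i <;>
        simp [hM1, Matrix.mulVec, dotProduct, Fin.sum_univ_two]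
    have hcol2 : (A1 : Mat2).mulVec ![0,1] = ((A1 : Mat2) 1 1) • ![0,1] := by
      funext i
      fin_cases i <;>
        simp [Matrix.mulVec, dotProduct, Fin.sum_univ_two, hb0]
    rw [hcol, hcol2, Matrix.mulVec_smul, Matrix.mulVec_smul, hcol] at h2
    have h3 : e⁻¹ • ((A : Mat2).mulVec w) = e⁻¹ • (((A1 : Mat2) 1 1) • w) := by
      rw [h2, smul_comm]
    exact smul_right_injective _ (inv_ne_zero he0) h3
  -- second conjugation
  obtain ⟨l, hl⟩ := IsAlgClosed.exists_pow_nat_eq ((A1 : Mat2) 0 1) (n := 2) (by norm_num)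
  have hl0 : l ≠ 0 := by
    intro h'
    apply hb
    rw [← hl, h']
    ring
  set M2 : Mat2 := !![l, 0; 0, l⁻¹] with hM2
  have hdet2 : M2.det = 1 := by
    rw [hM2, Matrix.det_fin_two_of]
    field_simp
    norm_num
  set g2 : SL2C := ⟨M2, hdet2⟩ with hg2
  set g : SL2C := g1 * g2 with hg
  set A2 : SL2C := g⁻¹ * A * g with hA2
  set B2 : SL2C := g⁻¹ * B * g with hB2
  have hg2coe : (g2 : Mat2) = M2 := rfl
  have hA2alt : A2 = g2⁻¹ * A1 * g2 := by rw [hA2, hA1, hg]; group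
  have hB2alt : B2 = g2⁻¹ * B1 * g2 := by rw [hB2, hB1, hg]; group
  have hA2val : (A2 : Mat2) = M2.adjugate * (A1 : Mat2) * M2 := by
    rw [hA2alt, Matrix.SpecialLinearGroup.coe_mul, Matrix.SpecialLinearGroup.coe_mul,
      Matrix.SpecialLinearGroup.coe_inv, hg2coe]
  have hB2val : (B2 : Mat2) = M2.adjugate * (B1 : Mat2) * M2 := by
    rw [hB2alt, Matrix.SpecialLinearGroup.coe_mul, Matrix.SpecialLinearGroup.coe_mul,
      Matrix.SpecialLinearGroup.coe_inv, hg2coe]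
  have hA2_10 : (A2 : Mat2) 1 0 = 0 := by
    rw [hA2val, Matrix.adjugate_fin_two, hM2]
    simp [Matrix.mul_apply, Matrix.vecMul, dotProduct, Fin.sum_univ_two, -mul_eq_zero]
    linear_combination (l * l) * hA1_10
  have hA2_01 : (A2 : Mat2) 0 1 = 1 := by
    rw [hA2val, Matrix.adjugate_fin_two, hM2]
    simp [Matrix.mul_apply, Matrix.vecMul, dotProduct, Fin.sum_univ_two, -mul_eq_zero]
    rw [← hl]
    field_simp
  have hB2_01 : (B2 : Mat2) 0 1 = 0 := by
    rw [hB2val, Matrix.adjugate_fin_two, hM2]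
    simp [Matrix.mul_apply, Matrix.vecMul, dotProduct, Fin.sum_univ_two, -mul_eq_zero]
    rw [hB1_01]
    ring
  -- normal forms
  have hA2mat : (A2 : Mat2) = !![(A2 : Mat2) 0 0, 1; 0, (A2 : Mat2) 1 1] := by
    ext i j
    fin_cases i <;> fin_cases j <;>
      simp [hA2_10, hA2_01]
  have hB2mat : (B2 : Mat2) = !![(B2 : Mat2) 0 0, 0; (B2 : Mat2) 1 0, (B2 : Mat2) 1 1] := by
    ext i j
    fin_cases i <;> fin_cases j <;>
      simp [hB2_01]
  have hsS : (A2 : Mat2) 0 0 * (A2 : Mat2) 1 1 = 1 := by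
    have hdet := A2.property
    rw [Matrix.det_fin_two] at hdet
    linear_combination hdet + ((A2 : Mat2) 0 1) * hA2_10
  have hpP : (B2 : Mat2) 0 0 * (B2 : Mat2) 1 1 = 1 := by
    have hdet := B2.property
    rw [Matrix.det_fin_two] at hdet
    linear_combination hdet + ((B2 : Mat2) 1 0) * hB2_01
  -- transfer the relation
  have hK2 : A2 * B2⁻¹ * A2⁻¹ * B2 * A2 * B2⁻¹ = B2 * A2 * B2⁻¹ * A2⁻¹ := by
    rw [hA2, hB2]
    have l1 : (g⁻¹*A*g) * (g⁻¹*B*g)⁻¹ * (g⁻¹*A*g)⁻¹ * (g⁻¹*B*g) * (g⁻¹*A*g) * (g⁻¹*B*g)⁻¹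
        = g⁻¹ * (A * B⁻¹ * A⁻¹ * B * A * B⁻¹) * g := by group
    have l2 : (g⁻¹*B*g) * (g⁻¹*A*g) * (g⁻¹*B*g)⁻¹ * (g⁻¹*A*g)⁻¹
        = g⁻¹ * (B * A * B⁻¹ * A⁻¹) * g := by group
    rw [l1, l2, hK]
  -- matrix form of the relation
  have hKm : !![(A2 : Mat2) 0 0, 1; 0, (A2 : Mat2) 1 1] *
      !![(B2 : Mat2) 1 1, 0; -(B2 : Mat2) 1 0, (B2 : Mat2) 0 0] *
      !![(A2 : Mat2) 1 1, -1; 0, (A2 : Mat2) 0 0] *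
      !![(B2 : Mat2) 0 0, 0; (B2 : Mat2) 1 0, (B2 : Mat2) 1 1] *
      !![(A2 : Mat2) 0 0, 1; 0, (A2 : Mat2) 1 1] *
      !![(B2 : Mat2) 1 1, 0; -(B2 : Mat2) 1 0, (B2 : Mat2) 0 0]
      = !![(B2 : Mat2) 0 0, 0; (B2 : Mat2) 1 0, (B2 : Mat2) 1 1] *
        !![(A2 : Mat2) 0 0, 1; 0, (A2 : Mat2) 1 1] *
        !![(B2 : Mat2) 1 1, 0; -(B2 : Mat2) 1 0, (B2 : Mat2) 0 0] *
        !![(A2 : Mat2) 1 1, -1; 0, (A2 : Mat2) 0 0] := by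
    have hc := congrArg (fun m : SL2C => (m : Mat2)) hK2
    simp only [Matrix.SpecialLinearGroup.coe_mul, Matrix.SpecialLinearGroup.coe_inv] at hc
    rw [hA2mat, hB2mat] at hc
    simpa [Matrix.adjugate_fin_two, neg_zero] using hc
  have hcore := fig8core ((A2 : Mat2) 0 0) ((A2 : Mat2) 1 1) ((B2 : Mat2) 0 0)
    ((B2 : Mat2) 1 1) ((B2 : Mat2) 1 0) hsS hpP hKm
  -- transfer the longitude trace
  have hL : B * A⁻¹ * B⁻¹ * A * A * B⁻¹ * A⁻¹ * B
      = g * (B2 * A2⁻¹ * B2⁻¹ * A2 * A2 * B2⁻¹ * A2⁻¹ * B2) * g⁻¹ := by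
    rw [hA2, hB2]
    group
  have htrL : Matrix.trace ((B * A⁻¹ * B⁻¹ * A * A * B⁻¹ * A⁻¹ * B : SL2C) : Mat2)
      = Matrix.trace ((B2 * A2⁻¹ * B2⁻¹ * A2 * A2 * B2⁻¹ * A2⁻¹ * B2 : SL2C) : Mat2) := by
    rw [hL]
    have := trace_conj g⁻¹ (B2 * A2⁻¹ * B2⁻¹ * A2 * A2 * B2⁻¹ * A2⁻¹ * B2)
    simpa using this
  have htrA : Matrix.trace (A : Mat2) = (A2 : Mat2) 0 0 + (A2 : Mat2) 1 1 := by
    have := trace_conj g A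
    rw [← hA2] at this
    rw [← this, Matrix.trace_fin_two]
  have hLm : ((B2 * A2⁻¹ * B2⁻¹ * A2 * A2 * B2⁻¹ * A2⁻¹ * B2 : SL2C) : Mat2)
      = !![(B2 : Mat2) 0 0, 0; (B2 : Mat2) 1 0, (B2 : Mat2) 1 1] *
        !![(A2 : Mat2) 1 1, -1; 0, (A2 : Mat2) 0 0] *
        !![(B2 : Mat2) 1 1, 0; -(B2 : Mat2) 1 0, (B2 : Mat2) 0 0] *
        !![(A2 : Mat2) 0 0, 1; 0, (A2 : Mat2) 1 1] *
        !![(A2 : Mat2) 0 0, 1; 0, (A2 : Mat2) 1 1] *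
        !![(B2 : Mat2) 1 1, 0; -(B2 : Mat2) 1 0, (B2 : Mat2) 0 0] *
        !![(A2 : Mat2) 1 1, -1; 0, (A2 : Mat2) 0 0] *
        !![(B2 : Mat2) 0 0, 0; (B2 : Mat2) 1 0, (B2 : Mat2) 1 1] := by
    simp only [Matrix.SpecialLinearGroup.coe_mul, Matrix.SpecialLinearGroup.coe_inv]
    rw [hA2mat, hB2mat]
    simp [Matrix.adjugate_fin_two, neg_zero]
  rw [htrL, hLm, htrA]
  exact hcore

/-- Trace identity tr ρ(l) = tr⁴ρ(m) − 5 tr²ρ(m) + 2 for irreducible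
representations of the figure-eight knot group into SL(2,ℂ). -/
theorem fig8_trace_identity
    (ρ : FigEightGroup →* Matrix.SpecialLinearGroup (Fin 2) ℂ)
    (hirr : ¬ ∃ w : Fin 2 → ℂ, w ≠ 0 ∧ ∀ γ : FigEightGroup,
      ∃ c : ℂ, (ρ γ : Matrix (Fin 2) (Fin 2) ℂ).mulVec w = c • w) :
    Matrix.trace ((ρ fig8l : Matrix (Fin 2) (Fin 2) ℂ)) =
      Matrix.trace ((ρ fig8m : Matrix (Fin 2) (Fin 2) ℂ)) ^ 4 -
      5 * Matrix.trace ((ρ fig8m : Matrix (Fin 2) (Fin 2) ℂ)) ^ 2 + 2 := by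
  set A : SL2C := ρ (PresentedGroup.of 0) with hA
  set B : SL2C := ρ (PresentedGroup.of 1) with hB
  -- the relator holds in the group
  have hrel : (PresentedGroup.of 0 * (PresentedGroup.of 1)⁻¹ * (PresentedGroup.of 0)⁻¹ *
      PresentedGroup.of 1 * PresentedGroup.of 0 * (PresentedGroup.of 1)⁻¹ *
      PresentedGroup.of 0 * PresentedGroup.of 1 * (PresentedGroup.of 0)⁻¹ *
      (PresentedGroup.of 1)⁻¹ : FigEightGroup) = 1 := by
    have hmem : (FreeGroup.of 0 * (FreeGroup.of 1)⁻¹ * (FreeGroup.of 0)⁻¹ * FreeGroup.of 1 *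
        FreeGroup.of 0 * (FreeGroup.of 1)⁻¹ * FreeGroup.of 0 * FreeGroup.of 1 *
        (FreeGroup.of 0)⁻¹ * (FreeGroup.of 1)⁻¹ : FreeGroup (Fin 2))
        ∈ Subgroup.normalClosure figEightRels :=
      Subgroup.subset_normalClosure rfl
    exact (QuotientGroup.eq_one_iff _).mpr hmem
  have hrelSL : A * B⁻¹ * A⁻¹ * B * A * B⁻¹ * A * B * A⁻¹ * B⁻¹ = 1 := by
    have key : ∀ a b : FigEightGroup, ρ (a * b⁻¹ * a⁻¹ * b * a * b⁻¹ * a * b * a⁻¹ * b⁻¹) =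
        ρ a * (ρ b)⁻¹ * (ρ a)⁻¹ * ρ b * ρ a * (ρ b)⁻¹ * ρ a * ρ b * (ρ a)⁻¹ * (ρ b)⁻¹ := by
      intro a b
      simp only [_root_.map_mul, _root_.map_inv]
    exact (key (PresentedGroup.of 0) (PresentedGroup.of 1)).symm.trans
      ((congrArg ρ hrel).trans (map_one ρ))
  have hK : A * B⁻¹ * A⁻¹ * B * A * B⁻¹ = B * A * B⁻¹ * A⁻¹ := by
    apply mul_inv_eq_one.mp
    rw [← hrelSL]
    group
  -- no common eigenvector
  have hnce : NoCommonEV A B := by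
    rintro ⟨v, hv, ⟨a, ha⟩, ⟨b, hb⟩⟩
    apply hirr
    refine ⟨v, hv, ?_⟩
    let H : Subgroup FigEightGroup :=
      { carrier := {γ : FigEightGroup | ∃ c : ℂ, ((ρ γ : Mat2)).mulVec v = c • v}
        one_mem' := ⟨1, by simp⟩
        mul_mem' := by
          rintro x y ⟨c, hc⟩ ⟨e, he⟩
          refine ⟨c * e, ?_⟩
          rw [_root_.map_mul, Matrix.SpecialLinearGroup.coe_mul, ← Matrix.mulVec_mulVec,
            he, Matrix.mulVec_smul, hc, smul_smul, mul_comm]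
        inv_mem' := by
          rintro x ⟨c, hc⟩
          have hc0 : c ≠ 0 := by
            rintro rfl
            rw [zero_smul] at hc
            exact sl2_mulVec_ne_zero (ρ x) hv hc
          refine ⟨c⁻¹, ?_⟩
          have h2 := sl2_mulVec_inv (ρ x) v
          rw [hc, Matrix.mulVec_smul] at h2
          rw [_root_.map_inv]
          rw [eq_inv_smul_iff₀ hc0, h2] }
    intro γ
    exact PresentedGroup.generated_by _ H (fun j => by
      fin_cases j
      · exact ⟨a, ha⟩
      · exact ⟨b, hb⟩) γ
  have hpair := fig8pair A B hK hnce
  have hρl : ρ fig8l = B * A⁻¹ * B⁻¹ * A * A * B⁻¹ * A⁻¹ * B := by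
    have key : ∀ a b : FigEightGroup, ρ (b * a⁻¹ * b⁻¹ * a * a * b⁻¹ * a⁻¹ * b) =
        ρ b * (ρ a)⁻¹ * (ρ b)⁻¹ * ρ a * ρ a * (ρ b)⁻¹ * (ρ a)⁻¹ * ρ b := by
      intro a b
      simp only [_root_.map_mul, _root_.map_inv]
    exact key (PresentedGroup.of 0) (PresentedGroup.of 1)
  have hρm : ρ fig8m = A := rfl
  rw [hρl, hρm, hpair]
end

section
/- Let ρ : Γ → SL(2,ℂ) be defined on the figure-eight knot group Γ = ⟨x, y | x y⁻¹ x⁻¹ y x y⁻¹ x y x⁻¹ y⁻¹⟩ by ρ(x) = [[1,1],[0,1]] and ρ(y) = [[1,0],[(1-i√3)/2, 1]]. Then ρ is a well-defined group homomorphism, i.e. ρ(x)ρ(y)⁻¹ρ(x)⁻¹ρ(y)ρ(x)ρ(y)⁻¹ρ(x)ρ(y)ρ(x)⁻¹ρ(y)⁻¹ = I₂. -/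
open Matrix

lemma fig8_aux (w : ℂ) (hw2 : w ^ 2 = w - 1) :
    (!![1, 1; 0, 1] : Matrix (Fin 2) (Fin 2) ℂ) * !![1, 0; -w, 1] * !![1, -1; 0, 1] *
      !![1, 0; w, 1] * !![1, 1; 0, 1] * !![1, 0; -w, 1] * !![1, 1; 0, 1] * !![1, 0; w, 1] *
      !![1, -1; 0, 1] * !![1, 0; -w, 1] = 1 := by
  have h1 : (!![1, 1; 0, 1] : Matrix (Fin 2) (Fin 2) ℂ) * !![1, 0; -w, 1] = !![1 + -w, 1; -w, 1] := by
    ext i j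
    fin_cases i <;> fin_cases j <;>
        simp [Matrix.mul_apply, Fin.sum_univ_two] <;>
        (first | ring1 | linear_combination hw2 | linear_combination -hw2 | linear_combination 2 * hw2 | linear_combination -2 * hw2)
  have h2 : (!![1 + -w, 1; -w, 1] : Matrix (Fin 2) (Fin 2) ℂ) * !![1, -1; 0, 1] = !![1 + -w, w; -w, 1 + w] := by
    ext i j
    fin_cases i <;> fin_cases j <;>
        simp [Matrix.mul_apply, Fin.sum_univ_two] <;>
        (first | ring1 | linear_combination hw2 | linear_combination -hw2 | linear_combination 2 * hw2 | linear_combination -2 * hw2)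
  have h3 : (!![1 + -w, w; -w, 1 + w] : Matrix (Fin 2) (Fin 2) ℂ) * !![1, 0; w, 1] = !![0, w; -1 + w, 1 + w] := by
    ext i j
    fin_cases i <;> fin_cases j <;>
        simp [Matrix.mul_apply, Fin.sum_univ_two] <;>
        (first | ring1 | linear_combination hw2 | linear_combination -hw2 | linear_combination 2 * hw2 | linear_combination -2 * hw2)
  have h4 : (!![0, w; -1 + w, 1 + w] : Matrix (Fin 2) (Fin 2) ℂ) * !![1, 1; 0, 1] = !![0, w; -1 + w, 0 + (2) * w] := by
    ext i j
    fin_cases i <;> fin_cases j <;>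
        simp [Matrix.mul_apply, Fin.sum_univ_two] <;>
        (first | ring1 | linear_combination hw2 | linear_combination -hw2 | linear_combination 2 * hw2 | linear_combination -2 * hw2)
  have h5 : (!![0, w; -1 + w, 0 + (2) * w] : Matrix (Fin 2) (Fin 2) ℂ) * !![1, 0; -w, 1] = !![1 + -w, w; 1 + -w, 0 + (2) * w] := by
    ext i j
    fin_cases i <;> fin_cases j <;>
        simp [Matrix.mul_apply, Fin.sum_univ_two] <;>
        (first | ring1 | linear_combination hw2 | linear_combination -hw2 | linear_combination 2 * hw2 | linear_combination -2 * hw2)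
  have h6 : (!![1 + -w, w; 1 + -w, 0 + (2) * w] : Matrix (Fin 2) (Fin 2) ℂ) * !![1, 1; 0, 1] = !![1 + -w, 1; 1 + -w, 1 + w] := by
    ext i j
    fin_cases i <;> fin_cases j <;>
        simp [Matrix.mul_apply, Fin.sum_univ_two] <;>
        (first | ring1 | linear_combination hw2 | linear_combination -hw2 | linear_combination 2 * hw2 | linear_combination -2 * hw2)
  have h7 : (!![1 + -w, 1; 1 + -w, 1 + w] : Matrix (Fin 2) (Fin 2) ℂ) * !![1, 0; w, 1] = !![1, 1; w, 1 + w] := by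
    ext i j
    fin_cases i <;> fin_cases j <;>
        simp [Matrix.mul_apply, Fin.sum_univ_two] <;>
        (first | ring1 | linear_combination hw2 | linear_combination -hw2 | linear_combination 2 * hw2 | linear_combination -2 * hw2)
  have h8 : (!![1, 1; w, 1 + w] : Matrix (Fin 2) (Fin 2) ℂ) * !![1, -1; 0, 1] = !![1, 0; w, 1] := by
    ext i j
    fin_cases i <;> fin_cases j <;>
        simp [Matrix.mul_apply, Fin.sum_univ_two] <;>
        (first | ring1 | linear_combination hw2 | linear_combination -hw2 | linear_combination 2 * hw2 | linear_combination -2 * hw2)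
  have h9 : (!![1, 0; w, 1] : Matrix (Fin 2) (Fin 2) ℂ) * !![1, 0; -w, 1] = !![1, 0; 0, 1] := by
    ext i j
    fin_cases i <;> fin_cases j <;>
        simp [Matrix.mul_apply, Fin.sum_univ_two] <;>
        (first | ring1 | linear_combination hw2 | linear_combination -hw2 | linear_combination 2 * hw2 | linear_combination -2 * hw2)
  rw [h1, h2, h3, h4, h5, h6, h7, h8, h9, ← Matrix.one_fin_two]

/-- The assignment x ↦ [[1,1],[0,1]], y ↦ [[1,0],[(1-i√3)/2,1]] gives a well-defined
representation of the figure-eight knot group into SL(2,ℂ): both matrices have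
determinant 1 and the relator maps to the identity. -/
theorem fig8_holonomy_well_defined :
    let X : Matrix (Fin 2) (Fin 2) ℂ := !![1, 1; 0, 1]
    let Y : Matrix (Fin 2) (Fin 2) ℂ := !![1, 0; (1 - Complex.I * Real.sqrt 3) / 2, 1]
    X.det = 1 ∧ Y.det = 1 ∧
    X * Y⁻¹ * X⁻¹ * Y * X * Y⁻¹ * X * Y * X⁻¹ * Y⁻¹ = 1 := by
  intro X Y
  have hs : (Real.sqrt 3 : ℂ) ^ 2 = 3 := by
    norm_cast
    rw [Real.sq_sqrt] <;> norm_num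
  have hw2 : ((1 - Complex.I * Real.sqrt 3) / 2 : ℂ) ^ 2 =
      (1 - Complex.I * Real.sqrt 3) / 2 - 1 := by
    field_simp
    linear_combination Complex.I ^ 2 * hs + 3 * Complex.I_sq
  have hXi : X⁻¹ = !![1, -1; 0, 1] := by
    rw [Matrix.inv_eq_right_inv]
    ext i j
    fin_cases i <;> fin_cases j <;>
      simp [X, Matrix.mul_apply, Fin.sum_univ_two]
  have hYi : Y⁻¹ = !![1, 0; -((1 - Complex.I * Real.sqrt 3) / 2), 1] := by
    rw [Matrix.inv_eq_right_inv]
    ext i j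
    fin_cases i <;> fin_cases j <;>
      simp [Y, Matrix.mul_apply, Fin.sum_univ_two]
  refine ⟨by simp [X, Matrix.det_fin_two_of], by simp [Y, Matrix.det_fin_two_of], ?_⟩
  rw [hXi, hYi]
  exact fig8_aux _ hw2
end
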